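/- (Data processing for the spectral sup-entropy rate.) Let φ_n: 𝒳^n × 𝒵^n → 𝒴^n be arbitrary mappings and set Ỹ^n = φ_n(X^n, Z^n). Then the spectral conditional sup-entropy rates satisfy H̄(X|Z) ≥ H̄(Ỹ|Z), where H̄(X|Z) = p-limsup_n (1/n) log 1/P_{X^n|Z^n}(X^n|Z^n). -/

import Mathlib

open scoped BigOperators

def IsPMF2 {α β : Type*} [Fintype α] [Fintype β] (p : α → β → ℝ) : Prop :=
  (∀ a b, 0 ≤ p a b) ∧ ∑ a, ∑ b, p a b = 1

/-- Spectral conditional sup-entropy rate `H̄(X|Z)` of a general source: the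
infimum of all `α` such that `Pr{(1/n) log 1/P_{X^n|Z^n}(X^n|Z^n) > α} → 0`. -/
noncomputable def specSupEnt {𝒳 𝒵 : Type*} [Fintype 𝒳] [Fintype 𝒵]
    (p : (n : ℕ) → (Fin n → 𝒳) → (Fin n → 𝒵) → ℝ) : ℝ :=
  sInf {α : ℝ | Filter.Tendsto
    (fun n => ∑ x : Fin n → 𝒳, ∑ z : Fin n → 𝒵,
      if α < (1 / (n : ℝ)) * Real.log (1 / (p n x z / (∑ x', p n x' z)))
      then p n x z else 0)
    Filter.atTop (nhds 0)}

/-- Joint distribution of `(Ỹ^n, Z^n)` where `Ỹ^n = φ_n(X^n, Z^n)`. -/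
noncomputable def pushJoint {𝒳 𝒴 𝒵 : Type*} [Fintype 𝒳] [DecidableEq 𝒴]
    (p : (n : ℕ) → (Fin n → 𝒳) → (Fin n → 𝒵) → ℝ)
    (φ : (n : ℕ) → (Fin n → 𝒳) → (Fin n → 𝒵) → (Fin n → 𝒴)) :
    (n : ℕ) → (Fin n → 𝒴) → (Fin n → 𝒵) → ℝ :=
  fun n y z => ∑ x, if φ n x z = y then p n x z else 0

/-- Data processing for the spectral sup-entropy rate: for `Ỹ^n = φ_n(X^n,Z^n)`
we have `H̄(X|Z) ≥ H̄(Ỹ|Z)`. Here `H̄(Ỹ|Z)` is computed on the original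
probability space, evaluating the conditional probability of `Ỹ^n` given `Z^n`
at the realized value `φ_n(X^n, Z^n)`. -/
theorem stmt16 {𝒳 𝒴 𝒵 : Type*} [Fintype 𝒳] [Fintype 𝒴] [Fintype 𝒵] [DecidableEq 𝒴]
    (p : (n : ℕ) → (Fin n → 𝒳) → (Fin n → 𝒵) → ℝ) (hp : ∀ n, IsPMF2 (p n))
    (φ : (n : ℕ) → (Fin n → 𝒳) → (Fin n → 𝒵) → (Fin n → 𝒴)) :
    sInf {α : ℝ | Filter.Tendsto
        (fun n => ∑ x : Fin n → 𝒳, ∑ z : Fin n → 𝒵,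
          if α < (1 / (n : ℝ)) *
              Real.log (1 / (pushJoint p φ n (φ n x z) z / (∑ x', p n x' z)))
          then p n x z else 0)
        Filter.atTop (nhds 0)}
      ≤ specSupEnt p := by
  classical
  have hnn : ∀ n (x : Fin n → 𝒳) (z : Fin n → 𝒵), 0 ≤ p n x z := fun n => (hp n).1
  have hpS : ∀ n (x : Fin n → 𝒳) (z : Fin n → 𝒵), p n x z ≤ ∑ x', p n x' z := by
    intro n x z
    exact Finset.single_le_sum (fun i _ => hnn n i z) (Finset.mem_univ x)
  have hS1 : ∀ n (z : Fin n → 𝒵), (∑ x', p n x' z) ≤ 1 := by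
    intro n z
    calc (∑ x', p n x' z) ≤ ∑ z' : Fin n → 𝒵, ∑ x' : Fin n → 𝒳, p n x' z' :=
          Finset.single_le_sum (f := fun z' => ∑ x', p n x' z')
            (fun i _ => Finset.sum_nonneg fun j _ => hnn n j i) (Finset.mem_univ z)
      _ = 1 := by rw [Finset.sum_comm]; exact (hp n).2
  have hpq : ∀ n (x : Fin n → 𝒳) (z : Fin n → 𝒵),
      p n x z ≤ pushJoint p φ n (φ n x z) z := by
    intro n x z
    unfold pushJoint
    have := Finset.single_le_sum (f := fun x' => if φ n x' z = φ n x z then p n x' z else 0)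
      (fun i _ => by split
                     · exact hnn n i z
                     · exact le_rfl) (Finset.mem_univ x)
    simpa using this
  have hqS : ∀ n (x : Fin n → 𝒳) (z : Fin n → 𝒵),
      pushJoint p φ n (φ n x z) z ≤ ∑ x', p n x' z := by
    intro n x z
    unfold pushJoint
    apply Finset.sum_le_sum
    intro i _
    split
    · exact le_rfl
    · exact hnn n i z
  unfold specSupEnt
  apply csInf_le_csInf
  · -- BddBelow of the Y-set
    refine ⟨0, fun α hα => ?_⟩
    by_contra hneg
    push_neg at hneg
    have hone : (fun n => ∑ x : Fin n → 𝒳, ∑ z : Fin n → 𝒵,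
        if α < (1 / (n : ℝ)) *
            Real.log (1 / (pushJoint p φ n (φ n x z) z / (∑ x', p n x' z)))
        then p n x z else 0) = fun _ => (1 : ℝ) := by
      funext n
      have : (∑ x : Fin n → 𝒳, ∑ z : Fin n → 𝒵,
          if α < (1 / (n : ℝ)) *
              Real.log (1 / (pushJoint p φ n (φ n x z) z / (∑ x', p n x' z)))
          then p n x z else 0) = ∑ x : Fin n → 𝒳, ∑ z : Fin n → 𝒵, p n x z := by
        refine Finset.sum_congr rfl fun x _ => Finset.sum_congr rfl fun z _ => ?_
        rcases eq_or_lt_of_le (hnn n x z) with h0 | h0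
        · split
          · rfl
          · exact h0
        · have hq : 0 < pushJoint p φ n (φ n x z) z := lt_of_lt_of_le h0 (hpq n x z)
          have hval : 0 ≤ (1 / (n : ℝ)) *
              Real.log (1 / (pushJoint p φ n (φ n x z) z / (∑ x', p n x' z))) := by
            apply mul_nonneg (by positivity)
            rw [one_div_div]
            exact Real.log_nonneg ((one_le_div hq).mpr (hqS n x z))
          rw [if_pos (lt_of_lt_of_le hneg hval)]
      rw [this, (hp n).2]
    have hα' : Filter.Tendsto (fun n => ∑ x : Fin n → 𝒳, ∑ z : Fin n → 𝒵,
        if α < (1 / (n : ℝ)) *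
            Real.log (1 / (pushJoint p φ n (φ n x z) z / (∑ x', p n x' z)))
        then p n x z else 0) Filter.atTop (nhds 0) := hα
    rw [hone] at hα'
    have := tendsto_nhds_unique hα' tendsto_const_nhds
    norm_num at this
  · -- Nonempty of the X-set
    set K : ℝ := (Fintype.card 𝒳 : ℝ) * (Fintype.card 𝒵 : ℝ) with hKdef
    have hK0 : 0 ≤ K := by positivity
    set α : ℝ := Real.log (K + 1) + 1 with hαdef
    have hα0 : 0 < α := by
      have := Real.log_nonneg (by linarith : (1:ℝ) ≤ K + 1)
      linarith
    refine ⟨α, ?_⟩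
    have hterm : ∀ n (x : Fin n → 𝒳) (z : Fin n → 𝒵),
        (if α < (1 / (n : ℝ)) * Real.log (1 / (p n x z / (∑ x', p n x' z)))
          then p n x z else 0) ≤ Real.exp (-α) ^ n := by
      intro n x z
      split_ifs with h
      · rcases eq_or_lt_of_le (hnn n x z) with h0 | h0
        · exfalso
          rw [← h0] at h
          simp at h
          linarith
        · have hS : 0 < ∑ x', p n x' z := lt_of_lt_of_le h0 (hpS n x z)
          have hn : n ≠ 0 := by
            rintro rfl
            norm_num at h
            linarith
          have hnpos : 0 < (n : ℝ) := Nat.cast_pos.mpr (Nat.pos_of_ne_zero hn)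
          rw [one_div_div] at h
          have h2 : α * (n : ℝ) <
              Real.log ((∑ x', p n x' z) / p n x z) := by
            have := (lt_div_iff₀ hnpos).mp (by rwa [one_div_mul_eq_div] at h)
            exact this
          have h4 : Real.log ((∑ x', p n x' z) / p n x z)
              = Real.log (∑ x', p n x' z) - Real.log (p n x z) :=
            Real.log_div hS.ne' h0.ne'
          have h5 : Real.log (∑ x', p n x' z) ≤ 0 :=
            Real.log_nonpos hS.le (hS1 n z)
          have h6 : Real.log (p n x z) ≤ (n : ℝ) * (-α) := by nlinarith
          calc p n x z = Real.exp (Real.log (p n x z)) := (Real.exp_log h0).symm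
            _ ≤ Real.exp ((n : ℝ) * (-α)) := Real.exp_le_exp.mpr h6
            _ = Real.exp (-α) ^ n := Real.exp_nat_mul _ _
      · positivity
    have hbound : ∀ n, (∑ x : Fin n → 𝒳, ∑ z : Fin n → 𝒵,
        if α < (1 / (n : ℝ)) * Real.log (1 / (p n x z / (∑ x', p n x' z)))
        then p n x z else 0) ≤ (K * Real.exp (-α)) ^ n := by
      intro n
      calc (∑ x : Fin n → 𝒳, ∑ z : Fin n → 𝒵,
            if α < (1 / (n : ℝ)) * Real.log (1 / (p n x z / (∑ x', p n x' z)))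
            then p n x z else 0)
          ≤ ∑ _x : Fin n → 𝒳, ∑ _z : Fin n → 𝒵, Real.exp (-α) ^ n :=
            Finset.sum_le_sum fun x _ => Finset.sum_le_sum fun z _ => hterm n x z
        _ = (K * Real.exp (-α)) ^ n := by
            rw [Finset.sum_const, Finset.sum_const, Finset.card_univ, Finset.card_univ,
              Fintype.card_fun, Fintype.card_fun, Fintype.card_fin]
            simp only [nsmul_eq_mul, hKdef]
            push_cast
            ring
    have hbase1 : K * Real.exp (-α) < 1 := by
      have hexp : Real.exp α = (K + 1) * Real.exp 1 := by
        rw [hαdef, Real.exp_add, Real.exp_log (by linarith)]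
      have he1 : (1 : ℝ) ≤ Real.exp 1 := by
        have := Real.add_one_le_exp (1 : ℝ); linarith
      have h2 : K < Real.exp α := by rw [hexp]; nlinarith
      have := (div_lt_one (Real.exp_pos α)).mpr h2
      rwa [div_eq_mul_inv, ← Real.exp_neg] at this
    have hbase0 : 0 ≤ K * Real.exp (-α) := by positivity
    have hnneg : ∀ n, 0 ≤ (∑ x : Fin n → 𝒳, ∑ z : Fin n → 𝒵,
        if α < (1 / (n : ℝ)) * Real.log (1 / (p n x z / (∑ x', p n x' z)))
        then p n x z else 0) := by
      intro n
      refine Finset.sum_nonneg fun x _ => Finset.sum_nonneg fun z _ => ?_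
      split
      · exact hnn n x z
      · exact le_rfl
    exact squeeze_zero hnneg hbound
      (tendsto_pow_atTop_nhds_zero_of_lt_one hbase0 hbase1)
  · -- subset
    intro α hα
    have key : ∀ n (x : Fin n → 𝒳) (z : Fin n → 𝒵),
        (if α < (1 / (n : ℝ)) *
            Real.log (1 / (pushJoint p φ n (φ n x z) z / (∑ x', p n x' z)))
          then p n x z else 0)
        ≤ (if α < (1 / (n : ℝ)) * Real.log (1 / (p n x z / (∑ x', p n x' z)))
          then p n x z else 0) := by
      intro n x z
      rcases eq_or_lt_of_le (hnn n x z) with h0 | h0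
      · rw [← h0]
        simp
      · have hS : 0 < ∑ x', p n x' z := lt_of_lt_of_le h0 (hpS n x z)
        have hq : 0 < pushJoint p φ n (φ n x z) z := lt_of_lt_of_le h0 (hpq n x z)
        have hval : (1 / (n : ℝ)) *
            Real.log (1 / (pushJoint p φ n (φ n x z) z / (∑ x', p n x' z)))
            ≤ (1 / (n : ℝ)) * Real.log (1 / (p n x z / (∑ x', p n x' z))) := by
          apply mul_le_mul_of_nonneg_left _ (by positivity)
          rw [one_div_div, one_div_div]
          apply Real.log_le_log (by positivity)
          gcongr
          exact hpq n x z
        split_ifs with h1 h2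
        · exact le_rfl
        · exact absurd (lt_of_lt_of_le h1 hval) h2
        · exact h0.le
        · exact le_rfl
    have hnneg : ∀ n, 0 ≤ (∑ x : Fin n → 𝒳, ∑ z : Fin n → 𝒵,
        if α < (1 / (n : ℝ)) *
            Real.log (1 / (pushJoint p φ n (φ n x z) z / (∑ x', p n x' z)))
        then p n x z else 0) := by
      intro n
      refine Finset.sum_nonneg fun x _ => Finset.sum_nonneg fun z _ => ?_
      split
      · exact hnn n x z
      · exact le_rfl
    exact squeeze_zero hnneg
      (fun n => Finset.sum_le_sum fun x _ => Finset.sum_le_sum fun z _ => key n x z) hα
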